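/- Let A, B, T be 2×2 complex matrices, let u : ℝ → ℝ be continuous, and let X : ℝ → M₂(ℂ) be differentiable with X(t) invertible for every t and satisfying X′(t) = (A + u(t)·B)·X(t) for all t. If Tr(T · X(t)⁻¹ · B · X(t)) = 0 for all t, then Tr(T · X(t)⁻¹ · (A·B − B·A) · X(t)) = 0 for all t. -/

import Mathlib

open Matrix

private lemma trace_mul_deriv {P Q : ℝ → Matrix (Fin 2) (Fin 2) ℂ}
    {P' Q' : Matrix (Fin 2) (Fin 2) ℂ} {t : ℝ}
    (hP : ∀ i j, HasDerivAt (fun s => P s i j) (P' i j) t)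
    (hQ : ∀ i j, HasDerivAt (fun s => Q s i j) (Q' i j) t) :
    HasDerivAt (fun s => (P s * Q s).trace) ((P' * Q t + P t * Q').trace) t := by
  have h : ∀ s, (P s * Q s).trace = ∑ i, ∑ k, P s i k * Q s k i := by
    intro s
    simp [Matrix.trace, Matrix.mul_apply, Matrix.diag]
  have h2 : (P' * Q t + P t * Q').trace
      = ∑ i, ∑ k, (P' i k * Q t k i + P t i k * Q' k i) := by
    simp [Matrix.trace, Matrix.mul_apply, Matrix.diag, Finset.sum_add_distrib]
  simp only [h, h2]
  exact HasDerivAt.fun_sum fun i _ => HasDerivAt.fun_sum fun k _ => (hP i k).mul (hQ k i)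

theorem stmt5 (A B T : Matrix (Fin 2) (Fin 2) ℂ) (u : ℝ → ℝ) (hu : Continuous u)
    (X : ℝ → Matrix (Fin 2) (Fin 2) ℂ)
    (hinv : ∀ t, IsUnit (X t))
    (hX : ∀ t i j, HasDerivAt (fun s => X s i j) (((A + (u t : ℂ) • B) * X t) i j) t)
    (hB : ∀ t, (T * (X t)⁻¹ * B * X t).trace = 0) :
    ∀ t, (T * (X t)⁻¹ * (A * B - B * A) * X t).trace = 0 := by
  intro t
  have hdu : ∀ s, IsUnit (X s).det := fun s => (Matrix.isUnit_iff_isUnit_det _).mp (hinv s)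
  have hdne : ∀ s, (X s).det ≠ 0 := fun s => (hdu s).ne_zero
  set M : Matrix (Fin 2) (Fin 2) ℂ := X t with hM
  set M' : Matrix (Fin 2) (Fin 2) ℂ := (A + (u t : ℂ) • B) * X t with hM'
  set e : ℂ := M' 0 0 * M 1 1 + M 0 0 * M' 1 1 - (M' 0 1 * M 1 0 + M 0 1 * M' 1 0) with he
  set d : ℂ := M.det with hd
  -- derivative of det
  have hdet : HasDerivAt (fun s => (X s).det) e t := by
    simp only [Matrix.det_fin_two]
    exact ((hX t 0 0).mul (hX t 1 1)).sub ((hX t 0 1).mul (hX t 1 0))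
  have hdetinv : HasDerivAt (fun s => ((X s).det)⁻¹) (-(d ^ 2)⁻¹ * e) t := by
    have h := (hasDerivAt_inv (x := d) (hdne t)).comp t hdet
    simpa [Function.comp_def] using h
  -- derivative of adjugate entries
  have hadj : ∀ i j, HasDerivAt (fun s => (X s).adjugate i j) (M'.adjugate i j) t := by
    intro i j
    fin_cases i <;> fin_cases j <;>
      simp only [Matrix.adjugate_fin_two, Matrix.cons_val', Matrix.cons_val_zero,
        Matrix.cons_val_one, Matrix.head_cons, Matrix.head_fin_const, Matrix.empty_val',
        Matrix.cons_val_fin_one, Matrix.of_apply, Fin.isValue]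
    · exact hX t 1 1
    · exact (hX t 0 1).neg
    · exact (hX t 1 0).neg
    · exact hX t 0 0
  set D : Matrix (Fin 2) (Fin 2) ℂ := (-(d ^ 2)⁻¹ * e) • M.adjugate + d⁻¹ • M'.adjugate with hD
  have hinvE : ∀ i j, HasDerivAt (fun s => (X s)⁻¹ i j) (D i j) t := by
    intro i j
    have fe : (fun s => (X s)⁻¹ i j) = fun s => ((X s).det)⁻¹ * (X s).adjugate i j := by
      funext s
      rw [Matrix.inv_def]
      simp [Ring.inverse_eq_inv', Matrix.smul_apply, smul_eq_mul]
    rw [fe]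
    exact hdetinv.mul (hadj i j)
  -- identify D
  have hDX : D * M + M⁻¹ * M' = 0 := by
    ext i j
    have h1 : HasDerivAt (fun s => ((X s)⁻¹ * X s) i j) ((D * M + M⁻¹ * M') i j) t := by
      simp only [Matrix.mul_apply, Matrix.add_apply]
      rw [Finset.sum_add_distrib.symm]
      exact HasDerivAt.fun_sum fun k _ => (hinvE i k).mul (hX t k j)
    have h2 : HasDerivAt (fun s => ((X s)⁻¹ * X s) i j) 0 t := by
      have : (fun s => ((X s)⁻¹ * X s) i j) = fun _ => (1 : Matrix (Fin 2) (Fin 2) ℂ) i j := by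
        funext s
        rw [Matrix.nonsing_inv_mul _ (hdu s)]
      rw [this]
      exact hasDerivAt_const _ _
    have := h1.unique h2
    simpa using this
  have hDeq : D = -(M⁻¹ * (A + (u t : ℂ) • B)) := by
    have hDM : D * M = -(M⁻¹ * M') := by
      linear_combination (norm := abel) hDX
    calc D = D * (M * M⁻¹) := by rw [Matrix.mul_nonsing_inv _ (hdu t), mul_one]
      _ = (D * M) * M⁻¹ := by rw [mul_assoc]
      _ = -(M⁻¹ * M') * M⁻¹ := by rw [hDM]
      _ = -(M⁻¹ * (A + (u t : ℂ) • B)) := by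
          rw [hM']
          simp only [Matrix.neg_mul, mul_assoc]
          rw [Matrix.mul_nonsing_inv _ (hdu t), mul_one]
  -- derivative of the trace function
  have hP : ∀ i j, HasDerivAt (fun s => (T * (X s)⁻¹) i j) ((T * D) i j) t := by
    intro i j
    simp only [Matrix.mul_apply]
    exact HasDerivAt.fun_sum fun k _ => (hinvE k j).const_mul (T i k)
  have hQ : ∀ i j, HasDerivAt (fun s => (B * X s) i j) ((B * M') i j) t := by
    intro i j
    simp only [Matrix.mul_apply]
    have : ∀ k, HasDerivAt (fun s => B i k * X s k j) (B i k * M' k j) t :=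
      fun k => (hX t k j).const_mul (B i k)
    exact HasDerivAt.fun_sum (fun k (_ : k ∈ Finset.univ) => this k)
  have key : HasDerivAt (fun s => (T * (X s)⁻¹ * B * X s).trace)
      ((T * D * (B * M) + T * M⁻¹ * (B * M')).trace) t := by
    have h := trace_mul_deriv hP hQ
    simpa only [mul_assoc] using h
  have hzero : HasDerivAt (fun s => (T * (X s)⁻¹ * B * X s).trace) 0 t := by
    have : (fun s => (T * (X s)⁻¹ * B * X s).trace) = fun _ => (0 : ℂ) := by
      funext s; exact hB s
    rw [this]; exact hasDerivAt_const _ _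
  have h0 : (T * D * (B * M) + T * M⁻¹ * (B * M')).trace = 0 := key.unique hzero
  have hident : T * D * (B * M) + T * M⁻¹ * (B * M')
      = -(T * M⁻¹ * (A * B - B * A) * M) := by
    rw [hDeq, hM']
    simp only [Matrix.mul_add, Matrix.add_mul, Matrix.mul_sub, Matrix.sub_mul,
      Matrix.neg_mul, Matrix.mul_neg, smul_mul_assoc, mul_smul_comm, mul_assoc]
    abel
  rw [hident, Matrix.trace_neg, neg_eq_zero] at h0
  exact h0
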